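/- arXiv:2509.20408 — 4 statements merged into one kernel-verified Lean document; each statement's English description precedes it below -/
import Mathlib

section
/- Let G be a finite directed acyclic graph with a source s0 and sink sf, and let F be a nonnegative edge flow satisfying flow conservation at every internal vertex (inflow equals outflow). If the total flow out of s0 is Z > 0, then the random walk that at each vertex chooses an outgoing edge with probability proportional to its flow value reaches sf almost surely, and the probability of reaching any terminal transition (edge into sf) from vertex v equals F(v→sf)/Z. -/
open Finset

/-- A nonnegative flow `F` on a finite DAG (acyclicity witnessed by a
rank function `rk` increasing along positive-flow edges) with source `s0` and sink `sf`,
satisfying flow conservation at every internal vertex, no edges into `s0` and none out of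
`sf`, and total outflow `Z > 0` at the source.  For the induced random walk (choose an
outgoing edge with probability proportional to its flow), the expected-visit function `u`
(characterized by the usual forward recursion) satisfies: the walk reaches `sf` almost
surely (total probability of taking a terminal edge is `1`), and the probability of
traversing the terminal edge `v → sf` equals `F v sf / Z`. -/
theorem stmt0
    {S : Type*} [Fintype S] [DecidableEq S]
    (s0 sf : S) (hne : s0 ≠ sf)
    (F : S → S → ℝ) (hFnonneg : ∀ v w, 0 ≤ F v w)
    (rk : S → ℕ) (hacyc : ∀ v w, 0 < F v w → rk v < rk w)
    (hno_in_s0 : ∀ v, F v s0 = 0) (hno_out_sf : ∀ v, F sf v = 0)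
    (out : S → ℝ) (hout : ∀ v, out v = ∑ w, F v w)
    (hcons : ∀ v, v ≠ s0 → v ≠ sf → (∑ w, F w v) = out v)
    (Z : ℝ) (hZ : Z = out s0) (hZpos : 0 < Z)
    (u : S → ℝ)  -- probability that the walk visits `v`
    (hu : ∀ v, u v = (if v = s0 then 1 else 0) + ∑ w, u w * (F w v / out w)) :
    (∑ v, u v * (F v sf / out v)) = 1 ∧
      ∀ v, u v * (F v sf / out v) = F v sf / Z := by
  have hZne : Z ≠ 0 := ne_of_gt hZpos
  -- out nonneg, and F v w ≤ out v
  have hFle : ∀ v w, F v w ≤ out v := by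
    intro v w
    rw [hout]
    exact Finset.single_le_sum (fun x _ => hFnonneg v x) (Finset.mem_univ w)
  -- key lemma: for v ≠ sf, u v = out v / Z
  have key : ∀ n, ∀ v, rk v < n → v ≠ sf → u v = out v / Z := by
    intro n
    induction n with
    | zero => intro v hv; omega
    | succ n ih =>
      intro v hv hvsf
      have hsum : (∑ w, u w * (F w v / out w)) = (∑ w, F w v) / Z := by
        rw [Finset.sum_div]
        apply Finset.sum_congr rfl
        intro w _
        rcases eq_or_lt_of_le (hFnonneg w v) with h0 | hpos
        · rw [← h0]; simp
        · have hrk : rk w < rk v := hacyc w v hpos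
          have hwsf : w ≠ sf := by
            intro h; rw [h, hno_out_sf] at hpos; exact lt_irrefl 0 hpos
          have huw : u w = out w / Z := ih w (by omega) hwsf
          have houtw : out w ≠ 0 := ne_of_gt (lt_of_lt_of_le hpos (hFle w v))
          rw [huw]; field_simp
      by_cases hvs0 : v = s0
      · subst hvs0
        rw [hu v, if_pos rfl, hsum]
        simp [hno_in_s0, ← hZ, hZne]
      · rw [hu v, if_neg hvs0, hsum, hcons v hvs0 hvsf]
        ring
  have key' : ∀ v, v ≠ sf → u v = out v / Z := fun v h => key (rk v + 1) v (by omega) h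
  -- second part
  have part2 : ∀ v, u v * (F v sf / out v) = F v sf / Z := by
    intro v
    by_cases hvsf : v = sf
    · subst hvsf; simp [hno_out_sf]
    · rw [key' v hvsf]
      rcases eq_or_lt_of_le (hFnonneg v sf) with h0 | hpos
      · rw [← h0]; simp
      · have houtv : out v ≠ 0 := ne_of_gt (lt_of_lt_of_le hpos (hFle v sf))
        field_simp
  refine ⟨?_, part2⟩
  -- total inflow into sf equals Z
  have hglobal : (∑ v, ((∑ w, F w v) - out v)) = 0 := by
    rw [Finset.sum_sub_distrib]
    simp only [hout]
    rw [Finset.sum_comm]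
    ring
  have hinsf : (∑ w, F w sf) = Z := by
    have hsub : ({s0, sf} : Finset S) ⊆ Finset.univ := Finset.subset_univ _
    have hzero : ∀ x ∈ (Finset.univ : Finset S), x ∉ ({s0, sf} : Finset S) →
        ((∑ w, F w x) - out x) = 0 := by
      intro x _ hx
      simp only [Finset.mem_insert, Finset.mem_singleton, not_or] at hx
      rw [hcons x hx.1 hx.2]; ring
    have := Finset.sum_subset hsub hzero
    rw [hglobal, Finset.sum_pair hne] at this
    have houtsf : out sf = 0 := by
      rw [hout]; exact Finset.sum_eq_zero (fun w _ => hno_out_sf w)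
    have hins0 : (∑ w, F w s0) = 0 := Finset.sum_eq_zero (fun w _ => hno_in_s0 w)
    rw [hins0, houtsf, ← hZ] at this
    linarith
  calc (∑ v, u v * (F v sf / out v)) = ∑ v, F v sf / Z := by
        exact Finset.sum_congr rfl (fun v _ => part2 v)
    _ = (∑ v, F v sf) / Z := by rw [Finset.sum_div]
    _ = 1 := by rw [hinsf]; field_simp
end

section
/- Let I be a finite index set and for each i ∈ I let μ_i, ν_i be nonnegative finite measures on a measurable space O_i with μ_i ≥ ν_i (i.e., μ_i(A) ≥ ν_i(A) for all measurable A) and μ_i ≠ 0. If the product measures satisfy ⊗_{i∈I} μ_i = ⊗_{i∈I} ν_i, then either some μ_i is the zero measure, or μ_i = ν_i for every i ∈ I. -/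
open MeasureTheory

/-- For finitely many finite measures `μ i ≥ ν i` with each `μ i ≠ 0`,
equality of the product measures `⊗ μ = ⊗ ν` forces either some `μ i = 0` or
componentwise equality `μ i = ν i` for all `i`. -/
theorem stmt3
    {I : Type*} [Fintype I]
    {O : I → Type*} [∀ i, MeasurableSpace (O i)]
    (μ ν : ∀ i, Measure (O i))
    [∀ i, IsFiniteMeasure (μ i)] [∀ i, IsFiniteMeasure (ν i)]
    (hdom : ∀ i, ν i ≤ μ i)
    (hne : ∀ i, μ i ≠ 0)
    (hprod : Measure.pi μ = Measure.pi ν) :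
    (∃ i, μ i = 0) ∨ ∀ i, μ i = ν i := by
  classical
  right
  -- masses
  have hfin : ∀ j, μ j Set.univ ≠ ⊤ := fun j => measure_ne_top _ _
  have hpos : ∀ j, μ j Set.univ ≠ 0 := by
    intro j h
    exact hne j (Measure.measure_univ_eq_zero.mp h)
  have hprodU : ∏ j, μ j Set.univ = ∏ j, ν j Set.univ := by
    have := congrArg (fun m : Measure (∀ i, O i) => m Set.univ) hprod
    simpa [Measure.pi_univ] using this
  have hle : ∀ j, ν j Set.univ ≤ μ j Set.univ := fun j => (hdom j) Set.univ
  have hmass : ∀ j, ν j Set.univ = μ j Set.univ := by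
    intro j
    by_contra h
    have hlt : ν j Set.univ < μ j Set.univ := lt_of_le_of_ne (hle j) h
    have h1 : ∏ k, ν k Set.univ ≤ ν j Set.univ * ∏ k ∈ Finset.univ.erase j, μ k Set.univ := by
      rw [show (∏ k, ν k Set.univ) = ν j Set.univ * ∏ k ∈ Finset.univ.erase j, ν k Set.univ from
        (Finset.mul_prod_erase Finset.univ (fun k => ν k Set.univ) (Finset.mem_univ j)).symm]
      exact mul_le_mul_right (Finset.prod_le_prod' fun k _ => hle k) _
    have hc0 : (∏ k ∈ Finset.univ.erase j, μ k Set.univ) ≠ 0 :=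
      Finset.prod_ne_zero_iff.mpr fun k _ => hpos k
    have hcT : (∏ k ∈ Finset.univ.erase j, μ k Set.univ) ≠ ⊤ :=
      ENNReal.prod_ne_top fun k _ => hfin k
    have h2 : ν j Set.univ * ∏ k ∈ Finset.univ.erase j, μ k Set.univ
        < μ j Set.univ * ∏ k ∈ Finset.univ.erase j, μ k Set.univ :=
      ENNReal.mul_lt_mul_left hc0 hcT hlt
    have h3 : μ j Set.univ * ∏ k ∈ Finset.univ.erase j, μ k Set.univ = ∏ k, μ k Set.univ :=
      Finset.mul_prod_erase Finset.univ (fun k => μ k Set.univ) (Finset.mem_univ j)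
    exact absurd hprodU (ne_of_gt (h3 ▸ lt_of_le_of_lt h1 h2 : (∏ k, ν k Set.univ) < ∏ k, μ k Set.univ))
  intro i
  ext A hA
  set s : ∀ j, Set (O j) := Function.update (fun j => Set.univ) i A with hs
  have hsm : ∀ j, MeasurableSet (s j) := by
    intro j
    rcases eq_or_ne j i with rfl | hj
    · simpa [hs] using hA
    · simp [hs, Function.update_of_ne hj]
  have key : ∏ j, μ j (s j) = ∏ j, ν j (s j) := by
    have := congrArg (fun m : Measure (∀ i, O i) => m (Set.pi Set.univ s)) hprod
    simpa [Measure.pi_pi] using this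
  have expand : ∀ (κ : ∀ j, Measure (O j)),
      ∏ j, κ j (s j) = κ i A * ∏ k ∈ Finset.univ.erase i, κ k Set.univ := by
    intro κ
    rw [← Finset.mul_prod_erase Finset.univ _ (Finset.mem_univ i)]
    congr 1
    · simp [hs]
    · exact Finset.prod_congr rfl fun k hk => by
        simp [hs, Function.update_of_ne (Finset.ne_of_mem_erase hk)]
  rw [expand μ, expand ν] at key
  have hmassprod : ∏ k ∈ Finset.univ.erase i, ν k Set.univ
      = ∏ k ∈ Finset.univ.erase i, μ k Set.univ :=
    Finset.prod_congr rfl fun k _ => hmass k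
  rw [hmassprod] at key
  have hc0 : (∏ k ∈ Finset.univ.erase i, μ k Set.univ) ≠ 0 :=
    Finset.prod_ne_zero_iff.mpr fun k _ => hpos k
  have hcT : (∏ k ∈ Finset.univ.erase i, μ k Set.univ) ≠ ⊤ :=
    ENNReal.prod_ne_top fun k _ => hfin k
  exact (ENNReal.mul_left_inj hc0 hcT).mp key
end

section
/- Consider a finite tree-structured MDP where each nonterminal state s has children and a flow F satisfying F(s, a) = Σ_{a'} F(T(s,a), a') for nonterminal next states, and F(s, a) = R(T(s,a)) when T(s,a) is terminal. Suppose a behavior policy μ with μ(a|s) > 0 for all legal actions, and let Q^μ be the (undiscounted) action value under μ defined by Q^μ(s,a) = Σ_{a'} μ(a'|s') Q^μ(s', a') for s' = T(s,a) nonterminal, with Q^μ(s,a) = R(s') f(s) at the last step, where f(s_n) = ∏_{t=0}^n 1/μ(a_t|s_t) along the unique path from the root to s_n. If μ is the uniform policy μ(a|s) = 1/|A(s)|, then Q^μ(s,a) = F(s,a) · f(s) for all state-action pairs. -/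
open Finset

/-- Tree-structured deterministic MDP (tree structure witnessed by a
depth function decreasing along transitions), with legal actions `A s`, transition `T`,
terminal predicate `term`, nonnegative reward `R` on terminal states, and a flow `F`
satisfying the flow-matching recursion.  `f s` is the product of inverse action
probabilities along the unique root-to-`s` path for the uniform behavior policy
`μ(a|s) = 1/|A s|`, so `f (T s a) = f s * |A (T s a)|`.  The action-value `Q` under the
uniform policy satisfies the backward recursion with terminal condition
`Q s a = R (T s a) * f s`.  Then `Q s a = F s a * f s` for every legal pair. -/
theorem stmt11
    {S : Type*} {Act : Type*} [DecidableEq Act]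
    (A : S → Finset Act) (T : S → Act → S) (term : S → Prop)
    (R : S → ℝ) (hR : ∀ s, 0 ≤ R s)
    (depth : S → ℕ) (htree : ∀ s, ∀ a ∈ A s, depth (T s a) < depth s)
    (F : S → Act → ℝ) (f : S → ℝ) (Q : S → Act → ℝ)
    (hf : ∀ s, ∀ a ∈ A s, ¬ term (T s a) →
      f (T s a) = f s * (A (T s a)).card)
    (hFrec : ∀ s, ∀ a ∈ A s, ¬ term (T s a) →
      F s a = ∑ a' ∈ A (T s a), F (T s a) a')
    (hFterm : ∀ s, ∀ a ∈ A s, term (T s a) → F s a = R (T s a))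
    (hQrec : ∀ s, ∀ a ∈ A s, ¬ term (T s a) →
      Q s a = (1 / ((A (T s a)).card : ℝ)) * ∑ a' ∈ A (T s a), Q (T s a) a')
    (hQterm : ∀ s, ∀ a ∈ A s, term (T s a) → Q s a = R (T s a) * f s) :
    ∀ s, ∀ a ∈ A s, Q s a = F s a * f s := by
  suffices h : ∀ n s, depth s = n → ∀ a ∈ A s, Q s a = F s a * f s by
    intro s; exact h (depth s) s rfl
  intro n
  induction n using Nat.strong_induction_on with
  | _ n ih =>
    intro s hd a ha
    by_cases ht : term (T s a)
    · rw [hQterm s a ha ht, hFterm s a ha ht]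
    · rw [hQrec s a ha ht, hFrec s a ha ht]
      have hih : ∀ a' ∈ A (T s a), Q (T s a) a' = F (T s a) a' * f (T s a) := by
        intro a' ha'
        exact ih (depth (T s a)) (hd ▸ htree s a ha) (T s a) rfl a' ha'
      rw [Finset.sum_congr rfl hih]
      by_cases hc : (A (T s a)).card = 0
      · rw [Finset.card_eq_zero] at hc
        simp [hc]
      · have hc' : ((A (T s a)).card : ℝ) ≠ 0 := Nat.cast_ne_zero.mpr hc
        rw [hf s a ha ht]
        have hsum : ∑ a' ∈ A (T s a), F (T s a) a' * (f s * ((A (T s a)).card : ℝ))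
            = ((A (T s a)).card : ℝ) * ((∑ a' ∈ A (T s a), F (T s a) a') * f s) := by
          rw [Finset.sum_mul, Finset.mul_sum]
          exact Finset.sum_congr rfl fun x _ => by ring
        rw [hsum, ← mul_assoc, one_div, inv_mul_cancel₀ hc', one_mul]
end

section
/- Let K be a substochastic kernel on a countable state space S with total escape mass: for every s, the probability of never escaping is zero in the sense that Σ_t (δ_s K^t)(S) → 0 as t → ∞. Then the only finite nonnegative measure ν on S with ν K = ν is ν = 0. -/
open MeasureTheory ProbabilityTheory Filter

/-- `iterBind K μ₀ t = μ₀ K^t`: the image of `μ₀` under `t` steps of the kernel `K`. -/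
noncomputable def iterBind {S : Type*} [MeasurableSpace S]
    (K : Kernel S S) (μ₀ : Measure S) : ℕ → Measure S
  | 0 => μ₀
  | (t + 1) => (iterBind K μ₀ t).bind fun x => K x

lemma measurable_iterBind_dirac {S : Type*} [MeasurableSpace S]
    (K : Kernel S S) (t : ℕ) :
    Measurable fun s => iterBind K (Measure.dirac s) t := by
  induction t with
  | zero => exact Measure.measurable_dirac
  | succ t ih =>
    exact (Measure.measurable_bind' K.measurable).comp ih

lemma iterBind_eq_bind {S : Type*} [MeasurableSpace S]
    (K : Kernel S S) (μ : Measure S) (t : ℕ) :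
    iterBind K μ t = μ.bind fun s => iterBind K (Measure.dirac s) t := by
  induction t with
  | zero =>
    show μ = μ.bind Measure.dirac
    exact Measure.bind_dirac.symm
  | succ t ih =>
    show (iterBind K μ t).bind (fun x => K x) = _
    rw [ih, Measure.bind_bind (measurable_iterBind_dirac K t).aemeasurable K.measurable.aemeasurable]
    rfl

lemma iterBind_dirac_univ_le {S : Type*} [MeasurableSpace S]
    (K : Kernel S S) (hsub : ∀ s, K s Set.univ ≤ 1) (s : S) (t : ℕ) :
    iterBind K (Measure.dirac s) t Set.univ ≤ 1 := by
  induction t with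
  | zero => simp [iterBind]
  | succ t ih =>
    show (iterBind K (Measure.dirac s) t).bind (fun x => K x) Set.univ ≤ 1
    rw [Measure.bind_apply MeasurableSet.univ K.measurable.aemeasurable]
    calc ∫⁻ x, K x Set.univ ∂(iterBind K (Measure.dirac s) t)
        ≤ ∫⁻ _, 1 ∂(iterBind K (Measure.dirac s) t) :=
          MeasureTheory.lintegral_mono fun x => hsub x
      _ = iterBind K (Measure.dirac s) t Set.univ := by simp
      _ ≤ 1 := ih

/-- Let `K` be a substochastic kernel on a countable state space that
is transient in the sense that from every state the surviving mass vanishes: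
`(δ_s K^t)(S) → 0` as `t → ∞`.  Then the only finite nonnegative measure `ν` with
`ν K = ν` (a "0-flow") is `ν = 0`. -/
theorem stmt18
    {S : Type*} [MeasurableSpace S] [Countable S]
    (K : Kernel S S) [IsFiniteKernel K]
    (hsub : ∀ s, K s Set.univ ≤ 1)
    (htrans : ∀ s, Tendsto (fun t => iterBind K (Measure.dirac s) t Set.univ)
      atTop (nhds 0))
    (ν : Measure S) [IsFiniteMeasure ν]
    (hfix : (ν.bind fun x => K x) = ν) :
    ν = 0 := by
  have hfixt : ∀ t, iterBind K ν t = ν := by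
    intro t
    induction t with
    | zero => rfl
    | succ t ih => show (iterBind K ν t).bind (fun x => K x) = ν; rw [ih, hfix]
  have key : ∀ t, ν Set.univ = ∫⁻ s, iterBind K (Measure.dirac s) t Set.univ ∂ν := by
    intro t
    conv_lhs => rw [← hfixt t, iterBind_eq_bind]
    rw [Measure.bind_apply MeasurableSet.univ (measurable_iterBind_dirac K t).aemeasurable]
  have hmeas : ∀ t : ℕ, Measurable fun s => iterBind K (Measure.dirac s) t Set.univ :=
    fun t => (Measure.measurable_coe MeasurableSet.univ).comp (measurable_iterBind_dirac K t)
  have hlim : Tendsto (fun t => ∫⁻ s, iterBind K (Measure.dirac s) t Set.univ ∂ν)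
      atTop (nhds (∫⁻ _, 0 ∂ν)) := by
    apply MeasureTheory.tendsto_lintegral_of_dominated_convergence (fun _ => 1)
    · exact fun t => hmeas t
    · exact fun t => Filter.Eventually.of_forall fun s => iterBind_dirac_univ_le K hsub s t
    · simp [MeasureTheory.measure_ne_top]
    · exact Filter.Eventually.of_forall fun s => htrans s
  have : ν Set.univ = 0 := by
    have h0 : Tendsto (fun _ : ℕ => ν Set.univ) atTop (nhds 0) := by
      simpa using hlim.congr fun t => (key t).symm
    exact tendsto_nhds_unique tendsto_const_nhds h0
  exact Measure.measure_univ_eq_zero.mp this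
end
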